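/- Exponential mean value trace inequality: for all Hermitian matrices A, B, C of the same size and all s > 0, |tr[C(e^A − e^B)]| ≤ (1/4) tr[(s(A−B)² + s^{-1}C²)(e^A + e^B)]. -/

import Mathlib

open Matrix
set_option maxHeartbeats 1000000

private lemma aux_one_sub_mul_exp_le (x : ℝ) : (1 - x) * Real.exp x ≤ 1 := by
  have h1 : 1 - x ≤ Real.exp (-x) := by linarith [Real.add_one_le_exp (-x)]
  have h2 := mul_le_mul_of_nonneg_right h1 (Real.exp_pos x).le
  rwa [Real.exp_neg, inv_mul_cancel₀ (Real.exp_ne_zero x)] at h2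

private lemma aux_exp_ineq (u : ℝ) (hu : 0 ≤ u) :
    Real.exp u - 1 ≤ u * (Real.exp u + 1) / 2 := by
  have hderiv : ∀ x : ℝ, HasDerivAt (fun x : ℝ => x * (Real.exp x + 1) / 2 - (Real.exp x - 1))
      ((Real.exp x + 1) / 2 + x * Real.exp x / 2 - Real.exp x) x := by
    intro x
    have h := (((hasDerivAt_id x).mul ((Real.hasDerivAt_exp x).add_const 1)).div_const 2).sub
        ((Real.hasDerivAt_exp x).sub_const 1)
    refine h.congr_deriv ?_
    simp only [id_eq]
    ring
  have hmono : Monotone (fun x : ℝ => x * (Real.exp x + 1) / 2 - (Real.exp x - 1)) := by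
    apply monotone_of_deriv_nonneg
    · exact fun x => (hderiv x).differentiableAt
    · intro x
      rw [(hderiv x).deriv]
      nlinarith [aux_one_sub_mul_exp_le x, Real.exp_pos x]
  have h0 := hmono hu
  simp only [Real.exp_zero] at h0
  norm_num at h0
  linarith

private lemma aux_exp_abs (p q : ℝ) :
    |Real.exp p - Real.exp q| ≤ |p - q| * (Real.exp p + Real.exp q) / 2 := by
  wlog hpq : q ≤ p with H
  · have := H q p (le_of_not_ge hpq)
    rwa [abs_sub_comm, abs_sub_comm q p, add_comm (Real.exp q)] at this
  · have hu : 0 ≤ p - q := by linarith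
    have h1 := aux_exp_ineq (p - q) hu
    have hexp : Real.exp p = Real.exp q * Real.exp (p - q) := by
      rw [← Real.exp_add]; congr 1; ring
    have hq := Real.exp_pos q
    have hle : Real.exp q ≤ Real.exp p := Real.exp_le_exp.mpr hpq
    rw [abs_of_nonneg (by linarith : (0:ℝ) ≤ Real.exp p - Real.exp q), abs_of_nonneg hu]
    nlinarith [mul_le_mul_of_nonneg_left h1 hq.le]

private lemma aux_term (s x y a b : ℝ) (hs : 0 < s) (hx : 0 ≤ x) (hy : 0 ≤ y) :
    x * y * |Real.exp a - Real.exp b| ≤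
      1 / 4 * ((s * ((a - b) ^ 2 * y ^ 2) + s⁻¹ * x ^ 2) * (Real.exp a + Real.exp b)) := by
  have h1 := aux_exp_abs a b
  have hAM : 2 * (x * (|a - b| * y)) ≤ s * ((a - b) ^ 2 * y ^ 2) + s⁻¹ * x ^ 2 := by
    have hkey : s * ((a-b)^2 * y^2) + s⁻¹ * x^2 - 2 * (x * (|a-b| * y))
        = s⁻¹ * (s * (|a-b| * y) - x) ^ 2 := by
      have habs : |a - b| ^ 2 = (a - b) ^ 2 := sq_abs _
      field_simp
      rw [← habs]
      ring
    nlinarith [mul_nonneg (inv_pos.mpr hs).le (sq_nonneg (s * (|a-b| * y) - x))]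
  calc x * y * |Real.exp a - Real.exp b|
      ≤ x * y * (|a - b| * (Real.exp a + Real.exp b) / 2) :=
        mul_le_mul_of_nonneg_left h1 (mul_nonneg hx hy)
    _ = x * (|a - b| * y) * ((Real.exp a + Real.exp b) / 2) := by ring
    _ ≤ (s * ((a - b) ^ 2 * y ^ 2) + s⁻¹ * x ^ 2) / 2 * ((Real.exp a + Real.exp b) / 2) := by
        apply mul_le_mul_of_nonneg_right _ (by positivity)
        linarith
    _ = 1 / 4 * ((s * ((a - b) ^ 2 * y ^ 2) + s⁻¹ * x ^ 2) * (Real.exp a + Real.exp b)) := by ring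

/-- Exponential mean value trace inequality: for Hermitian `A, B, C` and `s > 0`,
`|tr[C(e^A − e^B)]| ≤ (1/4) tr[(s(A−B)² + s⁻¹C²)(e^A + e^B)]`. -/
theorem exp_mean_value_trace_inequality {d : ℕ} (A B C : Matrix (Fin d) (Fin d) ℂ)
    (hA : A.IsHermitian) (hB : B.IsHermitian) (hC : C.IsHermitian) (s : ℝ) (hs : 0 < s) :
    ‖Matrix.trace (C * (NormedSpace.exp A - NormedSpace.exp B))‖ ≤
      (1 / 4) * (Matrix.trace ((s • (A - B) ^ 2 + s⁻¹ • C ^ 2) *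
        (NormedSpace.exp A + NormedSpace.exp B))).re := by
  classical
  set U : Matrix (Fin d) (Fin d) ℂ := (hA.eigenvectorUnitary : Matrix (Fin d) (Fin d) ℂ) with hUdef
  set V : Matrix (Fin d) (Fin d) ℂ := (hB.eigenvectorUnitary : Matrix (Fin d) (Fin d) ℂ) with hVdef
  set a : Fin d → ℝ := hA.eigenvalues with hadef
  set b : Fin d → ℝ := hB.eigenvalues with hbdef
  have hUU' : U * star U = 1 := Matrix.mem_unitaryGroup_iff.mp (hA.eigenvectorUnitary).2
  have hUU : star U * U = 1 := Matrix.mem_unitaryGroup_iff'.mp (hA.eigenvectorUnitary).2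
  have hVV' : V * star V = 1 := Matrix.mem_unitaryGroup_iff.mp (hB.eigenvectorUnitary).2
  have hVV : star V * V = 1 := Matrix.mem_unitaryGroup_iff'.mp (hB.eigenvectorUnitary).2
  have hAspec : A = U * Matrix.diagonal (fun i => (a i : ℂ)) * star U := by
    have h := hA.spectral_theorem
    rw [Unitary.conjStarAlgAut_apply] at h
    exact h
  have hBspec : B = V * Matrix.diagonal (fun j => (b j : ℂ)) * star V := by
    have h := hB.spectral_theorem
    rw [Unitary.conjStarAlgAut_apply] at h
    exact h
  have hexpA : NormedSpace.exp A
      = U * Matrix.diagonal (fun i => ((Real.exp (a i) : ℝ) : ℂ)) * star U := by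
    conv_lhs => rw [hAspec]
    have hUnit : IsUnit U := ⟨⟨U, star U, hUU', hUU⟩, rfl⟩
    have hinv : U⁻¹ = star U := Matrix.inv_eq_left_inv hUU
    rw [← hinv, Matrix.exp_conj U _ hUnit, Matrix.exp_diagonal, Pi.exp_def]
    simp only [← Complex.exp_eq_exp_ℂ, Complex.ofReal_exp]
  have hexpB : NormedSpace.exp B
      = V * Matrix.diagonal (fun j => ((Real.exp (b j) : ℝ) : ℂ)) * star V := by
    conv_lhs => rw [hBspec]
    have hUnit : IsUnit V := ⟨⟨V, star V, hVV', hVV⟩, rfl⟩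
    have hinv : V⁻¹ = star V := Matrix.inv_eq_left_inv hVV
    rw [← hinv, Matrix.exp_conj V _ hUnit, Matrix.exp_diagonal, Pi.exp_def]
    simp only [← Complex.exp_eq_exp_ℂ, Complex.ofReal_exp]
  set W : Matrix (Fin d) (Fin d) ℂ := star U * V with hWdef
  set cM : Matrix (Fin d) (Fin d) ℂ := star U * (C * V) with hcMdef
  set dM : Matrix (Fin d) (Fin d) ℂ := star U * ((A - B) * V) with hdMdef
  have hV1 : ∀ X : Matrix (Fin d) (Fin d) ℂ, V * (star V * X) = X := fun X => by
    rw [← Matrix.mul_assoc, hVV', Matrix.one_mul]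
  have hU1 : ∀ X : Matrix (Fin d) (Fin d) ℂ, U * (star U * X) = X := fun X => by
    rw [← Matrix.mul_assoc, hUU', Matrix.one_mul]
  have hCst : star C = C := hC
  have hDst : star (A - B) = A - B := hA.sub hB
  have hstarc : star cM = star V * (C * U) := by
    rw [hcMdef]
    simp only [Matrix.star_mul, star_star, hCst, Matrix.mul_assoc]
  have hstard : star dM = star V * ((A - B) * U) := by
    rw [hdMdef]
    simp only [Matrix.star_mul, star_star, hDst, Matrix.mul_assoc]
  have hCU : star U * (C * U) = W * star cM := by
    rw [hstarc, hWdef]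
    simp only [Matrix.mul_assoc]
    rw [hV1]
  have hCV : star V * (C * V) = star cM * W := by
    rw [hstarc, hWdef]
    simp only [Matrix.mul_assoc]
    rw [hU1]
  have hDDU : star U * ((A - B) * ((A - B) * U)) = dM * star dM := by
    rw [hstard, hdMdef]
    simp only [Matrix.mul_assoc]
    rw [hV1]
  have hDDV : star V * ((A - B) * ((A - B) * V)) = star dM * dM := by
    rw [hstard, hdMdef]
    simp only [Matrix.mul_assoc]
    rw [hU1]
  have hCCU : star U * (C * (C * U)) = cM * star cM := by
    rw [hstarc, hcMdef]
    simp only [Matrix.mul_assoc]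
    rw [hV1]
  have hCCV : star V * (C * (C * V)) = star cM * cM := by
    rw [hstarc, hcMdef]
    simp only [Matrix.mul_assoc]
    rw [hU1]
  have htr : ∀ (M P : Matrix (Fin d) (Fin d) ℂ) (v : Fin d → ℝ),
      Matrix.trace (M * (P * Matrix.diagonal (fun i => ((v i : ℝ) : ℂ)) * star P))
        = ∑ i, (star P * M * P) i i * (v i : ℂ) := by
    intro M P v
    rw [show M * (P * Matrix.diagonal (fun i => ((v i : ℝ) : ℂ)) * star P)
          = M * (P * Matrix.diagonal (fun i => ((v i : ℝ) : ℂ))) * star P by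
        simp only [Matrix.mul_assoc]]
    rw [Matrix.trace_mul_cycle]
    rw [show star P * M * (P * Matrix.diagonal (fun i => ((v i : ℝ) : ℂ)))
          = (star P * M * P) * Matrix.diagonal (fun i => ((v i : ℝ) : ℂ)) by
        simp only [Matrix.mul_assoc]]
    simp [Matrix.trace, Matrix.diag, Matrix.mul_diagonal]
  have hWc : ∀ i : Fin d, (W * star cM) i i = ∑ j, W i j * (starRingEnd ℂ) (cM i j) := by
    intro i
    simp [Matrix.mul_apply, Matrix.star_apply, Complex.star_def]
  have hcW : ∀ j : Fin d, (star cM * W) j j = ∑ i, (starRingEnd ℂ) (cM i j) * W i j := by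
    intro j
    simp [Matrix.mul_apply, Matrix.star_apply, Complex.star_def]
  have hXX : ∀ (X : Matrix (Fin d) (Fin d) ℂ) (i : Fin d),
      (X * star X) i i = ∑ j, (Complex.normSq (X i j) : ℂ) := by
    intro X i
    simp [Matrix.mul_apply, Matrix.star_apply, Complex.star_def, Complex.mul_conj]
  have hXX' : ∀ (X : Matrix (Fin d) (Fin d) ℂ) (j : Fin d),
      (star X * X) j j = ∑ i, (Complex.normSq (X i j) : ℂ) := by
    intro X j
    simp only [Matrix.mul_apply, Matrix.star_apply, Complex.star_def]
    refine Finset.sum_congr rfl fun i _ => ?_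
    rw [mul_comm, Complex.mul_conj]
  have hdMentry : ∀ i j, dM i j = ((a i : ℂ) - (b j : ℂ)) * W i j := by
    have h1 : star U * A = Matrix.diagonal (fun i => (a i : ℂ)) * star U := by
      conv_lhs => rw [hAspec]
      calc star U * (U * Matrix.diagonal (fun i => (a i : ℂ)) * star U)
          = (star U * U) * (Matrix.diagonal (fun i => (a i : ℂ)) * star U) := by
            simp only [Matrix.mul_assoc]
        _ = _ := by rw [hUU, Matrix.one_mul]
    have h2 : B * V = V * Matrix.diagonal (fun j => (b j : ℂ)) := by
      conv_lhs => rw [hBspec]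
      calc V * Matrix.diagonal (fun j => (b j : ℂ)) * star V * V
          = V * Matrix.diagonal (fun j => (b j : ℂ)) * (star V * V) := by
            simp only [Matrix.mul_assoc]
        _ = _ := by rw [hVV, Matrix.mul_one]
    have h3 : dM = Matrix.diagonal (fun i => (a i : ℂ)) * W
        - W * Matrix.diagonal (fun j => (b j : ℂ)) := by
      rw [hdMdef, Matrix.sub_mul, Matrix.mul_sub]
      congr 1
      · rw [← Matrix.mul_assoc, h1, Matrix.mul_assoc, ← hWdef]
      · rw [h2, ← Matrix.mul_assoc, ← hWdef]
    intro i j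
    rw [h3]
    simp only [Matrix.sub_apply, Matrix.diagonal_mul, Matrix.mul_diagonal]
    ring
  have hTCA : Matrix.trace (C * NormedSpace.exp A)
      = ∑ i, ∑ j, (starRingEnd ℂ) (cM i j) * W i j * ((Real.exp (a i) : ℝ) : ℂ) := by
    rw [hexpA, htr C U (fun i => Real.exp (a i))]
    refine Finset.sum_congr rfl fun i _ => ?_
    rw [show star U * C * U = W * star cM by simp only [Matrix.mul_assoc]; exact hCU]
    rw [hWc i, Finset.sum_mul]
    refine Finset.sum_congr rfl fun j _ => ?_
    ring
  have hTCB : Matrix.trace (C * NormedSpace.exp B)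
      = ∑ i, ∑ j, (starRingEnd ℂ) (cM i j) * W i j * ((Real.exp (b j) : ℝ) : ℂ) := by
    rw [hexpB, htr C V (fun j => Real.exp (b j))]
    rw [show (∑ j, (star V * C * V) j j * ((Real.exp (b j) : ℝ) : ℂ))
          = ∑ j, ∑ i, (starRingEnd ℂ) (cM i j) * W i j * ((Real.exp (b j) : ℝ) : ℂ) from ?_]
    · exact Finset.sum_comm
    refine Finset.sum_congr rfl fun j _ => ?_
    rw [show star V * C * V = star cM * W by simp only [Matrix.mul_assoc]; exact hCV]
    rw [hcW j, Finset.sum_mul]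
  have hT1 : Matrix.trace ((A - B) ^ 2 * NormedSpace.exp A)
      = ((∑ i, ∑ j, Complex.normSq (dM i j) * Real.exp (a i) : ℝ) : ℂ) := by
    rw [hexpA, sq, htr ((A - B) * (A - B)) U (fun i => Real.exp (a i))]
    push_cast
    refine Finset.sum_congr rfl fun i _ => ?_
    rw [show star U * ((A - B) * (A - B)) * U = dM * star dM by
          simp only [Matrix.mul_assoc]; exact hDDU]
    rw [hXX dM i, Finset.sum_mul]
  have hT2 : Matrix.trace ((A - B) ^ 2 * NormedSpace.exp B)
      = ((∑ i, ∑ j, Complex.normSq (dM i j) * Real.exp (b j) : ℝ) : ℂ) := by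
    rw [hexpB, sq, htr ((A - B) * (A - B)) V (fun j => Real.exp (b j))]
    push_cast
    rw [Finset.sum_comm]
    refine Finset.sum_congr rfl fun j _ => ?_
    rw [show star V * ((A - B) * (A - B)) * V = star dM * dM by
          simp only [Matrix.mul_assoc]; exact hDDV]
    rw [hXX' dM j, Finset.sum_mul]
  have hT3 : Matrix.trace (C ^ 2 * NormedSpace.exp A)
      = ((∑ i, ∑ j, Complex.normSq (cM i j) * Real.exp (a i) : ℝ) : ℂ) := by
    rw [hexpA, sq, htr (C * C) U (fun i => Real.exp (a i))]
    push_cast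
    refine Finset.sum_congr rfl fun i _ => ?_
    rw [show star U * (C * C) * U = cM * star cM by
          simp only [Matrix.mul_assoc]; exact hCCU]
    rw [hXX cM i, Finset.sum_mul]
  have hT4 : Matrix.trace (C ^ 2 * NormedSpace.exp B)
      = ((∑ i, ∑ j, Complex.normSq (cM i j) * Real.exp (b j) : ℝ) : ℂ) := by
    rw [hexpB, sq, htr (C * C) V (fun j => Real.exp (b j))]
    push_cast
    rw [Finset.sum_comm]
    refine Finset.sum_congr rfl fun j _ => ?_
    rw [show star V * (C * C) * V = star cM * cM by
          simp only [Matrix.mul_assoc]; exact hCCV]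
    rw [hXX' cM j, Finset.sum_mul]
  have hLHS : Matrix.trace (C * (NormedSpace.exp A - NormedSpace.exp B))
      = ∑ i, ∑ j, (starRingEnd ℂ) (cM i j) * W i j
          * (((Real.exp (a i) : ℝ) : ℂ) - ((Real.exp (b j) : ℝ) : ℂ)) := by
    rw [Matrix.mul_sub, Matrix.trace_sub, hTCA, hTCB, ← Finset.sum_sub_distrib]
    refine Finset.sum_congr rfl fun i _ => ?_
    rw [← Finset.sum_sub_distrib]
    refine Finset.sum_congr rfl fun j _ => ?_
    ring
  have hRHS : (Matrix.trace ((s • (A - B) ^ 2 + s⁻¹ • C ^ 2) *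
        (NormedSpace.exp A + NormedSpace.exp B))).re
      = ∑ i, ∑ j, (s * Complex.normSq (dM i j) + s⁻¹ * Complex.normSq (cM i j))
          * (Real.exp (a i) + Real.exp (b j)) := by
    rw [Matrix.add_mul, Matrix.smul_mul, Matrix.smul_mul, Matrix.mul_add, Matrix.mul_add,
      Matrix.trace_add, Matrix.trace_smul, Matrix.trace_smul, Matrix.trace_add, Matrix.trace_add,
      hT1, hT2, hT3, hT4]
    rw [← Complex.ofReal_add, ← Complex.ofReal_add, Complex.real_smul, Complex.real_smul,
      ← Complex.ofReal_mul, ← Complex.ofReal_mul, ← Complex.ofReal_add, Complex.ofReal_re]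
    simp only [mul_add, Finset.mul_sum, ← Finset.sum_add_distrib]
    refine Finset.sum_congr rfl fun i _ => ?_
    refine Finset.sum_congr rfl fun j _ => ?_
    ring
  rw [hLHS, hRHS]
  calc ‖(∑ i, ∑ j, (starRingEnd ℂ) (cM i j) * W i j
          * (((Real.exp (a i) : ℝ) : ℂ) - ((Real.exp (b j) : ℝ) : ℂ)))‖
      ≤ ∑ i, ∑ j, ‖((starRingEnd ℂ) (cM i j) * W i j
          * (((Real.exp (a i) : ℝ) : ℂ) - ((Real.exp (b j) : ℝ) : ℂ)))‖ :=
        (norm_sum_le _ _).trans (Finset.sum_le_sum fun i _ => norm_sum_le _ _)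
    _ ≤ 1 / 4 * ∑ i, ∑ j, (s * Complex.normSq (dM i j) + s⁻¹ * Complex.normSq (cM i j))
          * (Real.exp (a i) + Real.exp (b j)) := by
        rw [Finset.mul_sum]
        refine Finset.sum_le_sum fun i _ => ?_
        rw [Finset.mul_sum]
        refine Finset.sum_le_sum fun j _ => ?_
        have habs : ‖((starRingEnd ℂ) (cM i j) * W i j
              * (((Real.exp (a i) : ℝ) : ℂ) - ((Real.exp (b j) : ℝ) : ℂ)))‖
            = ‖(cM i j)‖ * ‖(W i j)‖
              * |Real.exp (a i) - Real.exp (b j)| := by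
          rw [norm_mul, norm_mul, Complex.norm_conj]
          congr 1
          rw [← Complex.ofReal_sub, Complex.norm_real, Real.norm_eq_abs]
        rw [habs]
        have hnd : Complex.normSq (dM i j) = (a i - b j) ^ 2 * Complex.normSq (W i j) := by
          rw [hdMentry i j, Complex.normSq_mul]
          congr 1
          rw [← Complex.ofReal_sub, Complex.normSq_ofReal, sq]
        rw [hnd]
        have hterm := aux_term s (‖(cM i j)‖) (‖(W i j)‖)
          (a i) (b j) hs (norm_nonneg _) (norm_nonneg _)
        rw [Complex.sq_norm, Complex.sq_norm] at hterm
        exact hterm
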